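/- Let (u_n) be a sequence of d×d complex matrices whose Cesàro means (1/n)·Σ_{l=0}^{n-1} u_l converge to a matrix L, and let g : ℝ → ℝ be continuously differentiable. Then (1/n)·Σ_{l=0}^{n-1} g(l/n)·u_l converges, as n → ∞, to L·∫_0^1 g(t) dt. -/

import Mathlib

open Filter Topology Finset

lemma riemann_aux (g : ℝ → ℝ) (hg : ContDiff ℝ 1 g) :
    Tendsto (fun n : ℕ => (n : ℝ)⁻¹ * ∑ l ∈ Finset.range n, g ((l : ℝ) / n)) atTop
      (𝓝 (∫ t in (0:ℝ)..1, g t)) := by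
  have hgc : Continuous g := hg.continuous
  obtain ⟨C, hC⟩ := isCompact_Icc.exists_bound_of_continuousOn
    (hg.continuous_deriv le_rfl).continuousOn (s := Set.Icc (0:ℝ) 1)
  set C' := max C 0 with hC'def
  have hC'0 : 0 ≤ C' := le_max_right _ _
  have hC' : ∀ x ∈ Set.Icc (0:ℝ) 1, ‖deriv g x‖ ≤ C' := fun x hx => (hC x hx).trans (le_max_left _ _)
  have hLip : ∀ x ∈ Set.Icc (0:ℝ) 1, ∀ y ∈ Set.Icc (0:ℝ) 1, ‖g y - g x‖ ≤ C' * ‖y - x‖ := by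
    intro x hx y hy
    exact Convex.norm_image_sub_le_of_norm_deriv_le
      (fun z _ => hg.differentiable one_ne_zero z) hC' (convex_Icc _ _) hx hy
  rw [← tendsto_sub_nhds_zero_iff]
  refine squeeze_zero_norm' ?_ (tendsto_const_div_atTop_nhds_zero_nat C')
  filter_upwards [Ici_mem_atTop 1] with n hn
  have hn0 : (0:ℝ) < n := by exact_mod_cast hn
  have hmem : ∀ l : ℕ, l ≤ n → ((l:ℝ)/n) ∈ Set.Icc (0:ℝ) 1 := by
    intro l hl
    constructor
    · positivity
    · rw [div_le_one hn0]; exact_mod_cast hl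
  have hsplit := intervalIntegral.sum_integral_adjacent_intervals
      (a := fun l : ℕ => (l:ℝ)/n) (μ := MeasureTheory.volume) (f := g) (n := n)
      (fun k _ => (hgc.intervalIntegrable _ _))
  simp only [Nat.cast_zero, zero_div, div_self hn0.ne'] at hsplit
  rw [← hsplit, mul_sum, ← sum_sub_distrib]
  calc ‖∑ l ∈ Finset.range n, ((n:ℝ)⁻¹ * g (l/n) - ∫ t in ((l:ℝ)/n)..(((l+1:ℕ):ℝ)/n), g t)‖
      ≤ ∑ l ∈ Finset.range n, ‖(n:ℝ)⁻¹ * g (l/n) - ∫ t in ((l:ℝ)/n)..(((l+1:ℕ):ℝ)/n), g t‖ :=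
        norm_sum_le _ _
    _ ≤ ∑ l ∈ Finset.range n, C' / n^2 := by
        refine sum_le_sum fun l hl => ?_
        rw [Finset.mem_range] at hl
        have h1 : (n:ℝ)⁻¹ * g (l/n) = ∫ _t in ((l:ℝ)/n)..(((l+1:ℕ):ℝ)/n), g ((l:ℝ)/n) := by
          rw [intervalIntegral.integral_const, smul_eq_mul]
          congr 1
          push_cast
          field_simp
          ring
        rw [h1, ← intervalIntegral.integral_sub (by simp) (hgc.intervalIntegrable _ _)]
        have hwidth : |(((l+1:ℕ):ℝ)/n) - ((l:ℝ)/n)| = 1/n := by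
          push_cast
          rw [div_sub_div_same, add_sub_cancel_left, abs_of_pos (by positivity)]
        have hb : ∀ x ∈ Set.uIoc ((l:ℝ)/n) (((l+1:ℕ):ℝ)/n), ‖g ((l:ℝ)/n) - g x‖ ≤ C' / n := by
          intro x hx
          have hle : (l:ℝ)/n ≤ ((l+1:ℕ):ℝ)/n := by
            gcongr
            push_cast; linarith
          rw [Set.uIoc_of_le hle] at hx
          have hx2 : x ≤ (l:ℝ)/n + 1/n := by
            have := hx.2
            push_cast at this
            rwa [add_div] at this
          have hx0 : x ∈ Set.Icc (0:ℝ) 1 := by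
            constructor
            · exact le_trans (by positivity) hx.1.le
            · refine hx.2.trans ?_
              rw [div_le_one hn0]
              exact_mod_cast hl
          refine (hLip x hx0 ((l:ℝ)/n) (hmem l hl.le)).trans ?_
          rw [Real.norm_eq_abs, abs_sub_comm,
            abs_of_nonneg (by linarith [hx.1.le] : (0:ℝ) ≤ x - (l:ℝ)/n)]
          calc C' * (x - (l:ℝ)/n) ≤ C' * (1/n) := by
                apply mul_le_mul_of_nonneg_left (by linarith) hC'0
            _ = C' / n := by ring
        calc ‖∫ x in ((l:ℝ)/n)..(((l+1:ℕ):ℝ)/n), (g ((l:ℝ)/n) - g x)‖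
            ≤ (C'/n) * |(((l+1:ℕ):ℝ)/n) - ((l:ℝ)/n)| :=
              intervalIntegral.norm_integral_le_of_norm_le_const hb
          _ = C' / n^2 := by rw [hwidth]; ring
    _ = C' / n := by
        rw [sum_const, card_range, nsmul_eq_mul]
        field_simp

lemma scalar_aux (u : ℕ → ℂ) (L : ℂ)
    (h : Tendsto (fun n : ℕ => (n:ℂ)⁻¹ * ∑ l ∈ Finset.range n, u l) atTop (𝓝 L))
    (g : ℝ → ℝ) (hg : ContDiff ℝ 1 g) :
    Tendsto (fun n : ℕ => (n:ℝ)⁻¹ • ∑ l ∈ Finset.range n, g ((l:ℝ)/n) • u l) atTop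
      (𝓝 ((∫ t in (0:ℝ)..1, g t) • L)) := by
  have hgc : Continuous g := hg.continuous
  -- Lipschitz constant
  obtain ⟨C, hC⟩ := isCompact_Icc.exists_bound_of_continuousOn
    (hg.continuous_deriv le_rfl).continuousOn (s := Set.Icc (0:ℝ) 1)
  set C' := max C 0 with hC'def
  have hC'0 : 0 ≤ C' := le_max_right _ _
  have hLip : ∀ x ∈ Set.Icc (0:ℝ) 1, ∀ y ∈ Set.Icc (0:ℝ) 1, ‖g y - g x‖ ≤ C' * ‖y - x‖ :=
    fun x hx y hy => Convex.norm_image_sub_le_of_norm_deriv_le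
      (fun z _ => hg.differentiable one_ne_zero z)
      (fun z hz => (hC z hz).trans (le_max_left _ _)) (convex_Icc _ _) hx hy
  -- sup bound
  obtain ⟨M, hM⟩ := isCompact_Icc.exists_bound_of_continuousOn hgc.continuousOn
    (s := Set.Icc (0:ℝ) 1)
  set M' := max M 0 with hM'def
  have hM'0 : 0 ≤ M' := le_max_right _ _
  have hM' : ∀ x ∈ Set.Icc (0:ℝ) 1, |g x| ≤ M' := fun x hx => (hM x hx).trans (le_max_left _ _)
  -- centered sums
  set v : ℕ → ℂ := fun l => u l - L with hv
  set T : ℕ → ℂ := fun n => ∑ l ∈ Finset.range n, v l with hT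
  have hTv : ∀ n : ℕ, T n = (∑ l ∈ Finset.range n, u l) - n • L := by
    intro n
    simp [hT, hv, Finset.sum_sub_distrib]
  have hT0 : Tendsto (fun n : ℕ => (n:ℂ)⁻¹ * T n) atTop (𝓝 0) := by
    have h2 : Tendsto (fun n : ℕ => ((n:ℂ)⁻¹ * ∑ l ∈ Finset.range n, u l) - L) atTop (𝓝 0) := by
      simpa using h.sub_const L
    refine Tendsto.congr' ?_ h2
    filter_upwards [Ici_mem_atTop 1] with n hn
    have hn' : (n:ℂ) ≠ 0 := Nat.cast_ne_zero.mpr (Nat.one_le_iff_ne_zero.mp hn)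
    rw [hTv, mul_sub, nsmul_eq_mul, ← mul_assoc, inv_mul_cancel₀ hn', one_mul]
  set b : ℕ → ℝ := fun n => (n:ℝ)⁻¹ * ‖T n‖ with hbdef
  have hb : Tendsto b atTop (𝓝 0) := by
    have := hT0.norm
    rw [norm_zero] at this
    refine this.congr fun n => ?_
    simp [hbdef, norm_mul]
  have hb0 : ∀ n, 0 ≤ b n := fun n => by positivity
  have hbz : b 0 = 0 := by simp [hbdef, hT]
  have hbc : Tendsto (fun n : ℕ => (n:ℝ)⁻¹ * ∑ l ∈ Finset.range n, b l) atTop (𝓝 0) := hb.cesaro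
  -- the centered part tends to 0
  have hA : Tendsto (fun n : ℕ => (n:ℝ)⁻¹ • ∑ l ∈ Finset.range n, g ((l:ℝ)/n) • v l)
      atTop (𝓝 0) := by
    have hD : Tendsto (fun n : ℕ => M' * b n + C' * ((n:ℝ)⁻¹ * ∑ l ∈ Finset.range n, b l))
        atTop (𝓝 0) := by
      have := (hb.const_mul M').add (hbc.const_mul C')
      simpa using this
    refine squeeze_zero_norm' ?_ hD
    filter_upwards [Ici_mem_atTop 1] with n hn
    have hn1 : 1 ≤ n := hn
    have hn0 : (0:ℝ) < n := by exact_mod_cast hn1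
    have hmem : ∀ l : ℕ, l ≤ n → ((l:ℝ)/n) ∈ Set.Icc (0:ℝ) 1 := by
      intro l hl
      constructor
      · positivity
      · rw [div_le_one hn0]; exact_mod_cast hl
    have habel : ∑ i ∈ Finset.range n, g ((i:ℝ)/n) • v i =
        g (((n-1:ℕ):ℝ)/n) • T n -
          ∑ i ∈ Finset.range (n-1), (g (((i+1:ℕ):ℝ)/n) - g ((i:ℝ)/n)) • T (i+1) :=
      Finset.sum_range_by_parts (fun i : ℕ => g ((i:ℝ)/n)) v n
    rw [habel, smul_sub]
    have hTb : ∀ m : ℕ, 1 ≤ m → ‖T m‖ = m * b m := by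
      intro m hm
      have : (m:ℝ) ≠ 0 := by positivity
      simp only [hbdef]
      rw [← mul_assoc, mul_inv_cancel₀ this, one_mul]
    calc ‖(n:ℝ)⁻¹ • (g (((n-1:ℕ):ℝ)/n) • T n) - (n:ℝ)⁻¹ •
          ∑ i ∈ Finset.range (n-1),
            (g (((i+1:ℕ):ℝ)/n) - g ((i:ℝ)/n)) • T (i+1)‖
        ≤ ‖(n:ℝ)⁻¹ • (g (((n-1:ℕ):ℝ)/n) • T n)‖ + ‖(n:ℝ)⁻¹ •
          ∑ i ∈ Finset.range (n-1),
            (g (((i+1:ℕ):ℝ)/n) - g ((i:ℝ)/n)) • T (i+1)‖ := norm_sub_le _ _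
      _ ≤ M' * b n + C' * ((n:ℝ)⁻¹ * ∑ l ∈ Finset.range n, b l) := by
          gcongr ?_ + ?_
          · rw [norm_smul, norm_smul, norm_inv, Real.norm_natCast, Real.norm_eq_abs]
            calc (n:ℝ)⁻¹ * (|g (((n-1:ℕ):ℝ)/n)| * ‖T n‖)
                ≤ (n:ℝ)⁻¹ * (M' * ‖T n‖) := by
                  gcongr
                  exact hM' _ (hmem _ (Nat.sub_le _ _))
              _ = M' * b n := by rw [hbdef]; ring
          · rw [norm_smul, norm_inv, Real.norm_natCast]
            have hterm : ∀ i ∈ Finset.range (n-1),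
                ‖(g (((i+1:ℕ):ℝ)/n) - g ((i:ℝ)/n)) • T (i+1)‖ ≤ C' * b (i+1) := by
              intro i hi
              rw [Finset.mem_range] at hi
              have hi1 : i + 1 ≤ n := by omega
              have hi0 : i ≤ n := by omega
              rw [norm_smul, hTb (i+1) le_add_self]
              have hg1 : ‖g (((i+1:ℕ):ℝ)/n) - g ((i:ℝ)/n)‖ ≤ C' * (1/n) := by
                refine (hLip _ (hmem i hi0) _ (hmem (i+1) hi1)).trans ?_
                gcongr
                rw [Real.norm_eq_abs]
                push_cast
                rw [div_sub_div_same, add_sub_cancel_left, abs_of_pos (by positivity)]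
              calc ‖g (((i+1:ℕ):ℝ)/n) - g ((i:ℝ)/n)‖ * (((i+1:ℕ):ℝ) * b (i+1))
                  ≤ (C' * (1/n)) * ((n:ℝ) * b (i+1)) := by
                    have : ((i+1:ℕ):ℝ) ≤ (n:ℝ) := by exact_mod_cast hi1
                    gcongr
                _ = C' * b (i+1) := by field_simp
            have hsum : ∑ i ∈ Finset.range (n-1), b (i+1) ≤ ∑ l ∈ Finset.range n, b l := by
              have hrw : ∑ l ∈ Finset.range n, b l
                  = ∑ i ∈ Finset.range (n-1), b (i+1) + b 0 := by
                conv_lhs => rw [show n = (n-1)+1 by omega]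
                rw [Finset.sum_range_succ']
              rw [hrw, hbz, add_zero]
            calc (n:ℝ)⁻¹ * ‖∑ i ∈ Finset.range (n-1),
                  (g (((i+1:ℕ):ℝ)/n) - g ((i:ℝ)/n)) • T (i+1)‖
                ≤ (n:ℝ)⁻¹ * ∑ i ∈ Finset.range (n-1), C' * b (i+1) := by
                  gcongr
                  exact (norm_sum_le _ _).trans (Finset.sum_le_sum hterm)
              _ = C' * ((n:ℝ)⁻¹ * ∑ i ∈ Finset.range (n-1), b (i+1)) := by
                  rw [← Finset.mul_sum]
                  ring
              _ ≤ C' * ((n:ℝ)⁻¹ * ∑ l ∈ Finset.range n, b l) := by gcongr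
  have hR := riemann_aux g hg
  have hfinal := hA.add (hR.smul_const L)
  rw [zero_add] at hfinal
  refine hfinal.congr fun n => ?_
  have hdec : ∀ l : ℕ, g ((l:ℝ)/n) • v l + g ((l:ℝ)/n) • L = g ((l:ℝ)/n) • u l := fun l => by
    rw [hv]; simp [smul_sub]
  calc (n:ℝ)⁻¹ • (∑ l ∈ Finset.range n, g ((l:ℝ)/n) • v l)
        + ((n:ℝ)⁻¹ * ∑ l ∈ Finset.range n, g ((l:ℝ)/n)) • L
      = (n:ℝ)⁻¹ • (∑ l ∈ Finset.range n, g ((l:ℝ)/n) • v l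
          + ∑ l ∈ Finset.range n, g ((l:ℝ)/n) • L) := by
        rw [smul_add, ← Finset.sum_smul, smul_smul]
    _ = (n:ℝ)⁻¹ • ∑ l ∈ Finset.range n, g ((l:ℝ)/n) • u l := by
        rw [← Finset.sum_add_distrib]
        congr 1
        exact Finset.sum_congr rfl fun l _ => hdec l

/-- If the Cesàro means of a sequence of `d × d` complex matrices converge to `L` and `g` is a
`C¹` real function, then `(1/n) ∑_{l<n} g(l/n) • u_l` converges to `(∫_0^1 g) • L`. -/
theorem statement2 {d : ℕ} (u : ℕ → Matrix (Fin d) (Fin d) ℂ) (L : Matrix (Fin d) (Fin d) ℂ)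
    (hCesaro : Tendsto (fun n : ℕ => ((n : ℂ)⁻¹) • ∑ l ∈ Finset.range n, u l)
      atTop (𝓝 L))
    (g : ℝ → ℝ) (hg : ContDiff ℝ 1 g) :
    Tendsto
      (fun n : ℕ => ((n : ℝ)⁻¹) • ∑ l ∈ Finset.range n, g ((l : ℝ) / n) • u l)
      atTop (𝓝 ((∫ t in (0:ℝ)..1, g t) • L)) := by
  apply tendsto_pi_nhds.mpr
  intro i
  apply tendsto_pi_nhds.mpr
  intro j
  have hij : Tendsto (fun n : ℕ => (n:ℂ)⁻¹ * ∑ l ∈ Finset.range n, u l i j) atTop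
      (𝓝 (L i j)) := by
    have h1 := tendsto_pi_nhds.mp (tendsto_pi_nhds.mp hCesaro i) j
    refine h1.congr fun n => ?_
    simp [Matrix.smul_apply, Matrix.sum_apply]
  have hs := scalar_aux (fun l => u l i j) (L i j) hij g hg
  refine hs.congr fun n => ?_
  simp [Matrix.smul_apply, Matrix.sum_apply]
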